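/- Let G be a finite simple graph. Then Σ_{(i,j)∈E} (k̃_i + k̃_j) = 2|P_1| + 4|P_2| + 2|P_3| + 6|C_3|, where |P_1|, |P_2|, |P_3| are the numbers of edges, paths of length two, and paths of length three, respectively, |C_3| is the number of triangles, k̃_i is the two-walks degree of vertex i, and the sum is over undirected edges. -/

import Mathlib

open Finset BigOperators Matrix SimpleGraph

noncomputable section

variable {V : Type*} [Fintype V] [DecidableEq V]

/-- Number of labelled (ordered) paths with `n` edges (`n+1` distinct vertices). -/
def labPath (G : SimpleGraph V) [DecidableRel G.Adj] (n : ℕ) : ℕ :=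
  (univ.filter (fun f : Fin (n + 1) → V =>
    Function.Injective f ∧ ∀ i : Fin n, G.Adj (f i.castSucc) (f i.succ))).card

/-- Number of edges, as a real number. -/
def p1 (G : SimpleGraph V) [DecidableRel G.Adj] : ℝ := G.edgeFinset.card

/-- Number of paths of length two (`P_2`, path on 3 vertices). -/
def p2 (G : SimpleGraph V) [DecidableRel G.Adj] : ℝ := (labPath G 2 : ℝ) / 2

/-- Number of paths of length three (`P_3`, path on 4 vertices). -/
def p3 (G : SimpleGraph V) [DecidableRel G.Adj] : ℝ := (labPath G 3 : ℝ) / 2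

/-- Number of paths of length four (`P_4`, path on 5 vertices). -/
def p4 (G : SimpleGraph V) [DecidableRel G.Adj] : ℝ := (labPath G 4 : ℝ) / 2

/-- Number of triangles. -/
def c3 (G : SimpleGraph V) [DecidableRel G.Adj] : ℝ :=
  ((univ.filter (fun f : Fin 3 → V => Function.Injective f ∧
    G.Adj (f 0) (f 1) ∧ G.Adj (f 1) (f 2) ∧ G.Adj (f 2) (f 0))).card : ℝ) / 6

/-- Number of 4-cycles. -/
def c4 (G : SimpleGraph V) [DecidableRel G.Adj] : ℝ :=
  ((univ.filter (fun f : Fin 4 → V => Function.Injective f ∧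
    G.Adj (f 0) (f 1) ∧ G.Adj (f 1) (f 2) ∧ G.Adj (f 2) (f 3) ∧ G.Adj (f 3) (f 0))).card : ℝ) / 8

/-- Number of 5-cycles. -/
def c5 (G : SimpleGraph V) [DecidableRel G.Adj] : ℝ :=
  ((univ.filter (fun f : Fin 5 → V => Function.Injective f ∧
    G.Adj (f 0) (f 1) ∧ G.Adj (f 1) (f 2) ∧ G.Adj (f 2) (f 3) ∧ G.Adj (f 3) (f 4) ∧
    G.Adj (f 4) (f 0))).card : ℝ) / 10

/-- Number of stars `S_{1,3}`: a center `f 0` adjacent to three leaves. -/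
def s13 (G : SimpleGraph V) [DecidableRel G.Adj] : ℝ :=
  ((univ.filter (fun f : Fin 4 → V => Function.Injective f ∧
    G.Adj (f 0) (f 1) ∧ G.Adj (f 0) (f 2) ∧ G.Adj (f 0) (f 3))).card : ℝ) / 6

/-- Number of tadpoles `S_{T1S}`: a triangle `f 0, f 1, f 2` with one pendant edge `f 0 – f 3`. -/
def sT1S (G : SimpleGraph V) [DecidableRel G.Adj] : ℝ :=
  ((univ.filter (fun f : Fin 4 → V => Function.Injective f ∧
    G.Adj (f 0) (f 1) ∧ G.Adj (f 1) (f 2) ∧ G.Adj (f 2) (f 0) ∧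
    G.Adj (f 0) (f 3))).card : ℝ) / 2

/-- Number of `S_{T2S}`: a triangle `f 0, f 1, f 2` with two pendant edges at `f 0`. -/
def sT2S (G : SimpleGraph V) [DecidableRel G.Adj] : ℝ :=
  ((univ.filter (fun f : Fin 5 → V => Function.Injective f ∧
    G.Adj (f 0) (f 1) ∧ G.Adj (f 1) (f 2) ∧ G.Adj (f 2) (f 0) ∧
    G.Adj (f 0) (f 3) ∧ G.Adj (f 0) (f 4))).card : ℝ) / 4

/-- Number of `S_Y` (the 'chair'/fork tree on 5 vertices): an edge `f 0 – f 1`,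
two further neighbours `f 2, f 3` of `f 0` and one further neighbour `f 4` of `f 1`. -/
def sY (G : SimpleGraph V) [DecidableRel G.Adj] : ℝ :=
  ((univ.filter (fun f : Fin 5 → V => Function.Injective f ∧
    G.Adj (f 0) (f 1) ∧ G.Adj (f 0) (f 2) ∧ G.Adj (f 0) (f 3) ∧
    G.Adj (f 1) (f 4))).card : ℝ) / 2

-- ===== auxiliary lemmas =====
section Aux
variable (G : SimpleGraph V) [DecidableRel G.Adj]

omit [Fintype V] in
private lemma inj3 {a b c : V} (h1 : a ≠ b) (h2 : a ≠ c) (h3 : b ≠ c) :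
    Function.Injective ![a, b, c] := by
  intro x y hxy
  fin_cases x <;> fin_cases y <;> simp_all

omit [Fintype V] in
private lemma inj4 {a b c d : V} (h1 : a ≠ b) (h2 : a ≠ c) (h3 : a ≠ d) (h4 : b ≠ c)
    (h5 : b ≠ d) (h6 : c ≠ d) : Function.Injective ![a, b, c, d] := by
  intro x y hxy
  fin_cases x <;> fin_cases y <;> simp_all

private lemma sum_lift (f : V → ℝ) :
    ∑ e ∈ G.edgeFinset, Sym2.lift ⟨fun i j => f i + f j, fun i j => by ring⟩ e
      = ∑ p ∈ univ.filter (fun p : V × V => G.Adj p.1 p.2), f p.1 := by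
  rw [← Finset.sum_fiberwise_of_maps_to (g := fun p : V × V => Sym2.mk p.1 p.2)
    (t := G.edgeFinset) (by
      intro p hp
      simp only [mem_filter] at hp
      simpa using hp.2)]
  refine Finset.sum_congr rfl ?_
  intro e he
  induction e with
  | _ i j =>
    have hadj : G.Adj i j := by simpa using he
    have hfib : (univ.filter (fun p : V × V => G.Adj p.1 p.2)).filter
        (fun p => Sym2.mk p.1 p.2 = s(i, j)) = {(i, j), (j, i)} := by
      ext p
      obtain ⟨a, b⟩ := p
      simp only [mem_filter, mem_univ, true_and, mem_insert, mem_singleton, Sym2.eq_iff,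
        Prod.mk.injEq]
      constructor
      · rintro ⟨-, (⟨rfl, rfl⟩ | ⟨rfl, rfl⟩)⟩ <;> simp
      · rintro (⟨rfl, rfl⟩ | ⟨rfl, rfl⟩) <;> simp [hadj, hadj.symm]
    rw [hfib, Finset.sum_insert (by simp [hadj.ne]), Finset.sum_singleton]
    simp

/-- The finset of quadruples corresponding to walks of length 3. -/
private def W : Finset (V × V × V × V) :=
  univ.filter fun q : V × V × V × V =>
    G.Adj q.1 q.2.1 ∧ G.Adj q.2.1 q.2.2.1 ∧ G.Adj q.2.2.1 q.2.2.2

private lemma bridge :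
    ∑ p ∈ univ.filter (fun p : V × V => G.Adj p.1 p.2),
        ((G.adjMatrix ℝ ^ 2) *ᵥ (fun _ => 1)) p.1 = ((W G).card : ℝ) := by
  have hf : ∀ a, ((G.adjMatrix ℝ ^ 2) *ᵥ (fun _ => 1)) a
      = ∑ c, if G.Adj a c then (∑ d, if G.Adj c d then (1:ℝ) else 0) else 0 := by
    intro a
    rw [pow_two, ← mulVec_mulVec, adjMatrix_mulVec_apply]
    rw [neighborFinset_eq_filter, Finset.sum_filter]
    refine Finset.sum_congr rfl fun c _ => ?_
    split
    · rw [adjMatrix_mulVec_apply, neighborFinset_eq_filter, Finset.sum_filter]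
    · rfl
  rw [W, Finset.card_eq_sum_ones]
  push_cast
  rw [Finset.sum_filter, Finset.sum_filter]
  simp only [Fintype.sum_prod_type, ite_and, hf, Finset.sum_ite_irrel, Finset.sum_const_zero]
  rw [Finset.sum_comm]
  refine Finset.sum_congr rfl fun a _ => Finset.sum_congr rfl fun b _ => ?_
  exact if_congr (G.adj_comm _ _) rfl rfl

private lemma labPath2_eq :
    labPath G 2 = (univ.filter (fun f : Fin 3 → V => Function.Injective f ∧
      G.Adj (f 0) (f 1) ∧ G.Adj (f 1) (f 2))).card := by
  rw [labPath]
  congr 1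
  ext f
  simp only [mem_filter, mem_univ, true_and, and_congr_right_iff]
  intro _
  rw [Fin.forall_fin_two]
  rfl

private lemma labPath3_eq :
    labPath G 3 = (univ.filter (fun f : Fin 4 → V => Function.Injective f ∧
      G.Adj (f 0) (f 1) ∧ G.Adj (f 1) (f 2) ∧ G.Adj (f 2) (f 3))).card := by
  rw [labPath]
  congr 1
  ext f
  simp only [mem_filter, mem_univ, true_and, and_congr_right_iff]
  intro _
  constructor
  · intro h
    exact ⟨h 0, h 1, h 2⟩
  · rintro ⟨h1, h2, h3⟩ i
    fin_cases i <;> assumption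

private lemma classA :
    ((W G).filter (fun q => q.1 = q.2.2.1 ∧ q.2.1 = q.2.2.2)).card
      = 2 * G.edgeFinset.card := by
  rw [G.two_mul_card_edgeFinset]
  refine Finset.card_bij' (fun q _ => (q.1, q.2.1)) (fun p _ => (p.1, p.2, p.1, p.2))
    ?_ ?_ ?_ ?_
  · rintro ⟨a, b, c, d⟩ hq
    simp only [W, mem_filter, mem_univ, true_and] at hq ⊢
    exact hq.1.1
  · rintro ⟨a, b⟩ hp
    simp only [mem_filter, mem_univ, true_and] at hp
    exact mem_filter.2 ⟨mem_filter.2 ⟨mem_univ _, hp, hp.symm, hp⟩, rfl, rfl⟩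
  · rintro ⟨a, b, c, d⟩ hq
    simp only [W, mem_filter, mem_univ, true_and] at hq
    obtain ⟨-, he1, he2⟩ := hq
    subst he1; subst he2
    rfl
  · rintro ⟨a, b⟩ _
    rfl

private lemma classB :
    ((W G).filter (fun q => q.1 = q.2.2.1 ∧ ¬ q.2.1 = q.2.2.2)).card = labPath G 2 := by
  rw [labPath2_eq]
  refine Finset.card_bij' (fun q _ => ![q.2.1, q.1, q.2.2.2])
    (fun f _ => (f 1, f 0, f 1, f 2)) ?_ ?_ ?_ ?_
  · rintro ⟨a, b, c, d⟩ hq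
    simp only [W, mem_filter, mem_univ, true_and] at hq ⊢
    obtain ⟨⟨h1, h2, h3⟩, he, hne⟩ := hq
    subst he
    refine ⟨inj3 h1.ne' (by simpa using hne) (G.ne_of_adj h3), ?_, ?_⟩ <;>
      simp [h1.symm, h3]
  · rintro f hf
    simp only [mem_filter, mem_univ, true_and] at hf
    obtain ⟨hinj, h1, h2⟩ := hf
    exact mem_filter.2 ⟨mem_filter.2 ⟨mem_univ _, h1.symm, h1, h2⟩, rfl, hinj.ne (by decide)⟩
  · rintro ⟨a, b, c, d⟩ hq
    simp only [W, mem_filter, mem_univ, true_and] at hq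
    obtain ⟨⟨h1, h2, h3⟩, he, hne⟩ := hq
    subst he
    simp
  · intro f hf
    funext x
    fin_cases x <;> simp

private lemma classC :
    ((W G).filter (fun q => ¬ q.1 = q.2.2.1 ∧ q.2.1 = q.2.2.2)).card = labPath G 2 := by
  rw [labPath2_eq]
  refine Finset.card_bij' (fun q _ => ![q.1, q.2.1, q.2.2.1])
    (fun f _ => (f 0, f 1, f 2, f 1)) ?_ ?_ ?_ ?_
  · rintro ⟨a, b, c, d⟩ hq
    simp only [W, mem_filter, mem_univ, true_and] at hq ⊢
    obtain ⟨⟨h1, h2, h3⟩, hne, he⟩ := hq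
    refine ⟨inj3 h1.ne hne h2.ne, ?_, ?_⟩ <;> simp [h1, h2]
  · rintro f hf
    simp only [mem_filter, mem_univ, true_and] at hf
    obtain ⟨hinj, h1, h2⟩ := hf
    exact mem_filter.2 ⟨mem_filter.2 ⟨mem_univ _, h1, h2, h2.symm⟩,
      hinj.ne (by decide), rfl⟩
  · rintro ⟨a, b, c, d⟩ hq
    simp only [W, mem_filter, mem_univ, true_and] at hq
    obtain ⟨⟨h1, h2, h3⟩, hne, he⟩ := hq
    subst he
    simp
  · intro f hf
    funext x
    fin_cases x <;> simp

private lemma classD :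
    ((W G).filter (fun q => (¬ q.1 = q.2.2.1 ∧ ¬ q.2.1 = q.2.2.2) ∧ q.1 = q.2.2.2)).card
      = (univ.filter (fun f : Fin 3 → V => Function.Injective f ∧
          G.Adj (f 0) (f 1) ∧ G.Adj (f 1) (f 2) ∧ G.Adj (f 2) (f 0))).card := by
  refine Finset.card_bij' (fun q _ => ![q.1, q.2.1, q.2.2.1])
    (fun f _ => (f 0, f 1, f 2, f 0)) ?_ ?_ ?_ ?_
  · rintro ⟨a, b, c, d⟩ hq
    simp only [W, mem_filter, mem_univ, true_and] at hq ⊢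
    obtain ⟨⟨h1, h2, h3⟩, ⟨hik, hjl⟩, he⟩ := hq
    subst he
    refine ⟨inj3 h1.ne hik h2.ne, ?_, ?_, ?_⟩ <;> simp [h1, h2, h3]
  · rintro f hf
    simp only [mem_filter, mem_univ, true_and] at hf
    obtain ⟨hinj, h1, h2, h3⟩ := hf
    exact mem_filter.2 ⟨mem_filter.2 ⟨mem_univ _, h1, h2, h3⟩,
      ⟨hinj.ne (by decide), hinj.ne (by decide)⟩, rfl⟩
  · rintro ⟨a, b, c, d⟩ hq
    simp only [W, mem_filter, mem_univ, true_and] at hq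
    obtain ⟨⟨h1, h2, h3⟩, ⟨hik, hjl⟩, he⟩ := hq
    subst he
    simp
  · intro f hf
    funext x
    fin_cases x <;> simp

private lemma classE :
    ((W G).filter (fun q => (¬ q.1 = q.2.2.1 ∧ ¬ q.2.1 = q.2.2.2) ∧ ¬ q.1 = q.2.2.2)).card
      = labPath G 3 := by
  rw [labPath3_eq]
  refine Finset.card_bij' (fun q _ => ![q.1, q.2.1, q.2.2.1, q.2.2.2])
    (fun f _ => (f 0, f 1, f 2, f 3)) ?_ ?_ ?_ ?_
  · rintro ⟨a, b, c, d⟩ hq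
    simp only [W, mem_filter, mem_univ, true_and] at hq ⊢
    obtain ⟨⟨h1, h2, h3⟩, ⟨hik, hjl⟩, hil⟩ := hq
    refine ⟨inj4 h1.ne hik hil h2.ne hjl h3.ne, ?_, ?_, ?_⟩ <;> simp [h1, h2, h3]
  · rintro f hf
    simp only [mem_filter, mem_univ, true_and] at hf
    obtain ⟨hinj, h1, h2, h3⟩ := hf
    exact mem_filter.2 ⟨mem_filter.2 ⟨mem_univ _, h1, h2, h3⟩,
      ⟨hinj.ne (by decide), hinj.ne (by decide)⟩, hinj.ne (by decide)⟩
  · rintro ⟨a, b, c, d⟩ _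
    rfl
  · intro f hf
    funext x
    fin_cases x <;> simp

private lemma count_main :
    ((W G).card : ℕ) = 2 * G.edgeFinset.card + labPath G 2 + labPath G 2 + labPath G 3
      + (univ.filter (fun f : Fin 3 → V => Function.Injective f ∧
          G.Adj (f 0) (f 1) ∧ G.Adj (f 1) (f 2) ∧ G.Adj (f 2) (f 0))).card := by
  classical
  have h1 := Finset.card_filter_add_card_filter_not
    (s := W G) (p := fun q => q.1 = q.2.2.1)
  have h2 := Finset.card_filter_add_card_filter_not
    (s := (W G).filter (fun q => q.1 = q.2.2.1)) (p := fun q => q.2.1 = q.2.2.2)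
  have h3 := Finset.card_filter_add_card_filter_not
    (s := (W G).filter (fun q => ¬ q.1 = q.2.2.1)) (p := fun q => q.2.1 = q.2.2.2)
  have h4 := Finset.card_filter_add_card_filter_not
    (s := ((W G).filter (fun q => ¬ q.1 = q.2.2.1)).filter (fun q => ¬ q.2.1 = q.2.2.2))
    (p := fun q => q.1 = q.2.2.2)
  simp only [Finset.filter_filter] at h1 h2 h3 h4
  rw [classA, classB] at h2
  rw [classC] at h3
  rw [classD, classE] at h4
  linarith [h1, h2, h3, h4]

end Aux

/-- `Σ_{(i,j)∈E} (k̃_i + k̃_j) = 2|P_1| + 4|P_2| + 2|P_3| + 6|C_3|`. -/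
theorem edge_sum_two_walks_degrees_subgraphs (G : SimpleGraph V) [DecidableRel G.Adj] :
    ∑ e ∈ G.edgeFinset,
        Sym2.lift ⟨fun i j => ((G.adjMatrix ℝ ^ 2) *ᵥ (fun _ => 1)) i
            + ((G.adjMatrix ℝ ^ 2) *ᵥ (fun _ => 1)) j,
          fun i j => by ring⟩ e
      = 2 * p1 G + 4 * p2 G + 2 * p3 G + 6 * c3 G := by
  refine Eq.trans (sum_lift G (fun i => ((G.adjMatrix ℝ ^ 2) *ᵥ (fun _ => 1)) i)) ?_
  rw [bridge G, count_main, p1, p2, p3, c3]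
  push_cast
  ring
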